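/- Let P₁ = (R₁, B₁) and P₂ = (R₂, B₂) be colorings (partitions into two disjoint spanning trees) of a wheel graph G on n vertices that have the same orientation. Then there exists a strictly monotone sequence of symmetric exchanges transforming P₁ into P₂, of length exactly (n−1) − |R₁ ∩ R₂|. -/

import Mathlib

open Set symmDiff

/-- The wheel graph whose outer cycle has vertex set `ZMod m` (`m ≥ 3`): the center `none`
is joined to every outer vertex, and outer vertices `some i`, `some (i+1)` are adjacent. -/
def wheelGraph (m : ℕ) : SimpleGraph (Option (ZMod m)) where
  Adj u v := u ≠ v ∧ (u = none ∨ v = none ∨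
    ∃ i : ZMod m, (u = some i ∧ v = some (i + 1)) ∨ (v = some i ∧ u = some (i + 1)))
  symm := by
    constructor
    rintro u v ⟨hne, h⟩
    refine ⟨hne.symm, ?_⟩
    rcases h with h | h | ⟨i, h | h⟩
    · exact Or.inr (Or.inl h)
    · exact Or.inl h
    · exact Or.inr (Or.inr ⟨i, Or.inr h⟩)
    · exact Or.inr (Or.inr ⟨i, Or.inl h⟩)
  loopless := ⟨fun u h => h.1 rfl⟩

/-- The spoke joining the center to the outer vertex `i`. -/
def spokeE (m : ℕ) (i : ZMod m) : Sym2 (Option (ZMod m)) := s(none, some i)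

/-- The rim edge joining the outer vertices `i` and `i + 1`. -/
def rimE (m : ℕ) (i : ZMod m) : Sym2 (Option (ZMod m)) := s(some i, some (i + 1))

/-- `T` is the edge set of a spanning tree of the wheel: a set of wheel edges whose
associated graph is connected and acyclic. -/
def IsTreeSet (m : ℕ) (T : Set (Sym2 (Option (ZMod m)))) : Prop :=
  T ⊆ (wheelGraph m).edgeSet ∧ (SimpleGraph.fromEdgeSet T).Connected ∧
    (SimpleGraph.fromEdgeSet T).IsAcyclic

/-- A coloring of the wheel: a partition of its edge set into two spanning trees. -/
def IsWheelColoring (m : ℕ)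
    (P : Set (Sym2 (Option (ZMod m))) × Set (Sym2 (Option (ZMod m)))) : Prop :=
  IsTreeSet m P.1 ∧ IsTreeSet m P.2 ∧ Disjoint P.1 P.2 ∧
    P.1 ∪ P.2 = (wheelGraph m).edgeSet

/-- `WExchSeq m P L Q` : the list `L` of pairs `(e, f)` records a sequence of feasible
symmetric exchanges (each swapping a red edge `e` with a blue edge `f`, both color classes
remaining spanning trees) transforming the coloring `P` into `Q`. -/
def WExchSeq (m : ℕ) :
    Set (Sym2 (Option (ZMod m))) × Set (Sym2 (Option (ZMod m))) →
    List (Sym2 (Option (ZMod m)) × Sym2 (Option (ZMod m))) →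
    Set (Sym2 (Option (ZMod m))) × Set (Sym2 (Option (ZMod m))) → Prop
  | P, [], Q => P = Q
  | P, (e, f) :: L, Q =>
      ∃ P' : Set (Sym2 (Option (ZMod m))) × Set (Sym2 (Option (ZMod m))),
        e ∈ P.1 ∧ f ∈ P.2 ∧
        P'.1 = insert f (P.1 \ {e}) ∧ P'.2 = insert e (P.2 \ {f}) ∧
        IsWheelColoring m P' ∧ WExchSeq m P' L Q

/-- A coloring has positive orientation if every boundary rim edge (a rim edge whose two
neighbouring spokes have different colors) has the color of the spoke preceding it in the
counterclockwise (positive) direction. -/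
def PositiveOrientation (m : ℕ)
    (P : Set (Sym2 (Option (ZMod m))) × Set (Sym2 (Option (ZMod m)))) : Prop :=
  ∀ i : ZMod m, (spokeE m i ∈ P.1 ↔ spokeE m (i + 1) ∈ P.1) ∨
    (rimE m i ∈ P.1 ↔ spokeE m i ∈ P.1)

/-- A coloring has negative orientation if every boundary rim edge has the color of the
spoke following it in the positive direction. -/
def NegativeOrientation (m : ℕ)
    (P : Set (Sym2 (Option (ZMod m))) × Set (Sym2 (Option (ZMod m)))) : Prop :=
  ∀ i : ZMod m, (spokeE m i ∈ P.1 ↔ spokeE m (i + 1) ∈ P.1) ∨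
    (rimE m i ∈ P.1 ↔ spokeE m (i + 1) ∈ P.1)

/-- Two colorings have the same orientation. -/
def SameOrientation (m : ℕ)
    (P Q : Set (Sym2 (Option (ZMod m))) × Set (Sym2 (Option (ZMod m)))) : Prop :=
  (PositiveOrientation m P ∧ PositiveOrientation m Q) ∨
    (NegativeOrientation m P ∧ NegativeOrientation m Q)

/-- Two colorings have different orientations. -/
def DifferentOrientation (m : ℕ)
    (P Q : Set (Sym2 (Option (ZMod m))) × Set (Sym2 (Option (ZMod m)))) : Prop :=
  (PositiveOrientation m P ∧ NegativeOrientation m Q) ∨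
    (NegativeOrientation m P ∧ PositiveOrientation m Q)

/-- The number of intervals (maximal runs of consecutive same-colored spokes) of a
coloring: the number of boundaries, i.e. of indices `i` such that the spokes `i` and
`i + 1` have different colors. -/
noncomputable def intervalCount (m : ℕ)
    (P : Set (Sym2 (Option (ZMod m))) × Set (Sym2 (Option (ZMod m)))) : ℕ :=
  {i : ZMod m | ¬ (spokeE m i ∈ P.1 ↔ spokeE m (i + 1) ∈ P.1)}.ncard

/-- The total weight of a sequence of symmetric exchanges. -/
def wSeqWeight (m : ℕ) (w : Sym2 (Option (ZMod m)) → NNReal)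
    (L : List (Sym2 (Option (ZMod m)) × Sym2 (Option (ZMod m)))) : NNReal :=
  (L.map fun p => w p.1 + w p.2).sum

/-- The number of times an exchange sequence uses the edge `a`. -/
def wUsesCount (m : ℕ) (L : List (Sym2 (Option (ZMod m)) × Sym2 (Option (ZMod m))))
    (a : Sym2 (Option (ZMod m))) : ℕ :=
  (L.map Prod.fst).count a + (L.map Prod.snd).count a

namespace StmtAux

variable {m : ℕ}

lemma two_ne (hm : 3 ≤ m) : (2 : ZMod m) ≠ 0 := by
  haveI : NeZero m := ⟨by omega⟩
  have : ((2:ℕ) : ZMod m) ≠ 0 := by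
    rw [Ne, ZMod.natCast_eq_zero_iff]
    intro h; have := Nat.le_of_dvd (by norm_num) h; omega
  simpa using this

lemma one_ne (hm : 3 ≤ m) : (1 : ZMod m) ≠ 0 := by
  haveI : NeZero m := ⟨by omega⟩
  have : ((1:ℕ) : ZMod m) ≠ 0 := by
    rw [Ne, ZMod.natCast_eq_zero_iff]
    intro h; have := Nat.le_of_dvd (by norm_num) h; omega
  simpa using this

lemma spokeE_inj {i j : ZMod m} (h : spokeE m i = spokeE m j) : i = j := by
  simp only [spokeE, Sym2.eq_iff] at h
  rcases h with ⟨-, h⟩ | ⟨h, -⟩ <;> simp_all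

lemma rimE_inj (hm : 3 ≤ m) {i j : ZMod m} (h : rimE m i = rimE m j) : i = j := by
  simp only [rimE, Sym2.eq_iff, Option.some.injEq] at h
  rcases h with ⟨h, -⟩ | ⟨h1, h2⟩
  · exact h
  · exact absurd (by rw [h1] at h2; linear_combination h2) (two_ne hm)

lemma spokeE_ne_rimE {i j : ZMod m} : spokeE m i ≠ rimE m j := by
  simp [spokeE, rimE, Sym2.eq_iff]

def redSet (m : ℕ) (S : Set (ZMod m)) (c : ZMod m) : Set (Sym2 (Option (ZMod m))) :=
  {e | ∃ i, (i ∈ S ∧ e = spokeE m i) ∨ (i + c ∉ S ∧ e = rimE m i)}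

lemma spokeE_mem_redSet {S : Set (ZMod m)} {c i : ZMod m} :
    spokeE m i ∈ redSet m S c ↔ i ∈ S := by
  constructor
  · rintro ⟨j, ⟨hj, he⟩ | ⟨hj, he⟩⟩
    · rwa [spokeE_inj he]
    · exact absurd he spokeE_ne_rimE
  · exact fun h => ⟨i, Or.inl ⟨h, rfl⟩⟩

lemma rimE_mem_redSet (hm : 3 ≤ m) {S : Set (ZMod m)} {c i : ZMod m} :
    rimE m i ∈ redSet m S c ↔ i + c ∉ S := by
  constructor
  · rintro ⟨j, ⟨hj, he⟩ | ⟨hj, he⟩⟩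
    · exact absurd he.symm spokeE_ne_rimE
    · rwa [rimE_inj hm he]
  · exact fun h => ⟨i, Or.inr ⟨h, rfl⟩⟩

lemma mem_redSet_shape {S : Set (ZMod m)} {c : ZMod m} {e} (h : e ∈ redSet m S c) :
    ∃ i, e = spokeE m i ∨ e = rimE m i := by
  rcases h with ⟨i, ⟨-, he⟩ | ⟨-, he⟩⟩
  · exact ⟨i, Or.inl he⟩
  · exact ⟨i, Or.inr he⟩

lemma spokeE_mem_edgeSet (i : ZMod m) : spokeE m i ∈ (wheelGraph m).edgeSet := by
  show (none : Option (ZMod m)) ≠ some i ∧ _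
  exact ⟨by simp, Or.inl rfl⟩

lemma rimE_mem_edgeSet (hm : 3 ≤ m) (i : ZMod m) : rimE m i ∈ (wheelGraph m).edgeSet := by
  show (some i : Option (ZMod m)) ≠ some (i + 1) ∧ _
  refine ⟨?_, Or.inr (Or.inr ⟨i, Or.inl ⟨rfl, rfl⟩⟩)⟩
  simp only [Ne, Option.some.injEq]
  intro h
  exact one_ne hm (by linear_combination -h)

lemma edge_shape {e} (h : e ∈ (wheelGraph m).edgeSet) :
    ∃ i, e = spokeE m i ∨ e = rimE m i := by
  induction e with
  | _ u v =>
    rw [SimpleGraph.mem_edgeSet] at h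
    change u ≠ v ∧ _ at h
    obtain ⟨hne, h⟩ := h
    rcases h with rfl | rfl | ⟨i, ⟨rfl, rfl⟩ | ⟨rfl, rfl⟩⟩
    · match v with
      | none => exact absurd rfl hne
      | some j => exact ⟨j, Or.inl rfl⟩
    · match u with
      | none => exact absurd rfl hne
      | some j => exact ⟨j, Or.inl (Sym2.eq_swap)⟩
    · exact ⟨i, Or.inr rfl⟩
    · exact ⟨i, Or.inr (Sym2.eq_swap)⟩

lemma redSet_subset (hm : 3 ≤ m) (S : Set (ZMod m)) (c : ZMod m) :
    redSet m S c ⊆ (wheelGraph m).edgeSet := by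
  intro e he
  obtain ⟨i, rfl | rfl⟩ := mem_redSet_shape he
  · exact spokeE_mem_edgeSet i
  · exact rimE_mem_edgeSet hm i

lemma redSet_disjoint (hm : 3 ≤ m) (S : Set (ZMod m)) (c : ZMod m) :
    Disjoint (redSet m S c) (redSet m Sᶜ c) := by
  rw [Set.disjoint_left]
  intro e he he'
  obtain ⟨i, rfl | rfl⟩ := mem_redSet_shape he
  · rw [spokeE_mem_redSet] at he he'
    exact he' he
  · rw [rimE_mem_redSet hm] at he he'
    exact he' (by simpa using he)

lemma redSet_union (hm : 3 ≤ m) (S : Set (ZMod m)) (c : ZMod m) :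
    redSet m S c ∪ redSet m Sᶜ c = (wheelGraph m).edgeSet := by
  apply Set.Subset.antisymm
  · exact Set.union_subset (redSet_subset hm S c) (redSet_subset hm Sᶜ c)
  · intro e he
    obtain ⟨i, rfl | rfl⟩ := edge_shape he
    · by_cases h : i ∈ S
      · exact Or.inl (spokeE_mem_redSet.2 h)
      · exact Or.inr (spokeE_mem_redSet.2 h)
    · by_cases h : i + c ∈ S
      · exact Or.inr ((rimE_mem_redSet hm).2 (by simpa using h))
      · exact Or.inl ((rimE_mem_redSet hm).2 h)


-- ## Part 2 : tree property

lemma cut_not_reachable {G' : SimpleGraph (Option (ZMod m))} {A : Set (Option (ZMod m))}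
    (hcross : ∀ a b, G'.Adj a b → (a ∈ A ↔ b ∈ A)) {v w} (hv : v ∈ A) (hw : w ∉ A) :
    ¬ G'.Reachable v w := by
  intro h
  obtain ⟨p⟩ := h
  have key : ∀ {x y : Option (ZMod m)}, G'.Walk x y → x ∈ A → y ∈ A := by
    intro x y p
    induction p with
    | nil => exact id
    | cons h q ih => intro hx; exact ih ((hcross _ _ h).1 hx)
  exact hw (key p hv)

lemma d_ne_zero (hm : 3 ≤ m) {d : ZMod m} (hdd : d * d = 1) : d ≠ 0 := by
  intro h; rw [h, mul_zero] at hdd; exact one_ne hm hdd.symm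

lemma er_inj (hm : 3 ≤ m) {d : ZMod m} (hdd : d * d = 1) {x y : ZMod m}
    (h : s((some x : Option (ZMod m)), some (x + d)) = s(some y, some (y + d))) : x = y := by
  simp only [Sym2.eq_iff, Option.some.injEq] at h
  rcases h with ⟨h, -⟩ | ⟨h1, h2⟩
  · exact h
  · exfalso
    have h2d : (2 : ZMod m) * d = 0 := by
      rw [h1] at h2
      linear_combination h2
    have : (2 : ZMod m) = 0 := by
      calc (2:ZMod m) = 2 * (d * d) := by rw [hdd]; ring
      _ = (2 * d) * d := by ring
      _ = 0 := by rw [h2d, zero_mul]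
    exact two_ne hm this

lemma spokeE_ne_er {i x d : ZMod m} :
    spokeE m i ≠ s((some x : Option (ZMod m)), some (x + d)) := by
  simp [spokeE, Sym2.eq_iff]

lemma full_cover (hm : 3 ≤ m) {S : Set (ZMod m)} {d : ZMod m} (hdd : d * d = 1)
    (hS : S.Nonempty) (a : ZMod m) (t : ℕ) (ht : m ≤ t + 1)
    (hcond : ∀ u : ℕ, u ≤ t → a + (u : ZMod m) * d ∉ S) : False := by
  haveI : NeZero m := ⟨by omega⟩
  obtain ⟨s, hs⟩ := hS
  set u := ((s - a) * d).val with hu_def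
  have hu : u ≤ t := by
    have := ZMod.val_lt ((s - a) * d)
    omega
  apply hcond u hu
  have hcast : ((u : ℕ) : ZMod m) = (s - a) * d := by
    rw [hu_def, ZMod.natCast_val, ZMod.cast_id]
  rw [hcast]
  have : a + (s - a) * d * d = s := by linear_combination (s - a) * hdd
  rw [this]; exact hs

lemma redSet_connected (hm : 3 ≤ m) {S : Set (ZMod m)} {c d : ZMod m} (hdd : d * d = 1)
    (hS : S.Nonempty)
    (hmemS : ∀ i, i ∈ S → spokeE m i ∈ redSet m S c)
    (hmemR : ∀ x : ZMod m, x + d ∉ S → s((some x : Option (ZMod m)), some (x + d)) ∈ redSet m S c) :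
    (SimpleGraph.fromEdgeSet (redSet m S c)).Connected := by
  haveI : NeZero m := ⟨by omega⟩
  set G := SimpleGraph.fromEdgeSet (redSet m S c) with hG
  have hadjS : ∀ i, i ∈ S → G.Adj none (some i) := by
    intro i hi
    rw [hG, SimpleGraph.fromEdgeSet_adj]
    exact ⟨hmemS i hi, by simp⟩
  have hadjR : ∀ x : ZMod m, x + d ∉ S → G.Adj (some x) (some (x + d)) := by
    intro x hx
    rw [hG, SimpleGraph.fromEdgeSet_adj]
    refine ⟨hmemR x hx, ?_⟩
    simp only [Ne, Option.some.injEq]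
    intro h
    exact d_ne_zero hm hdd (by linear_combination -h)
  have key : ∀ (k : ℕ) (j : ZMod m), j - (k : ZMod m) * d ∈ S → G.Reachable none (some j) := by
    intro k
    induction k with
    | zero => intro j hj; simp only [Nat.cast_zero, zero_mul, sub_zero] at hj
              exact (hadjS j hj).reachable
    | succ k ih =>
      intro j hj
      by_cases h : j ∈ S
      · exact (hadjS j h).reachable
      · have h2 : (j - d) + d ∉ S := by simpa using h
        have hadj := hadjR (j - d) h2
        rw [sub_add_cancel] at hadj
        have hmem : (j - d) - (k : ZMod m) * d ∈ S := by
          have : (j - d) - (k : ZMod m) * d = j - ((k + 1 : ℕ) : ZMod m) * d := by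
            push_cast; ring
          rw [this]; exact hj
        exact (ih (j - d) hmem).trans hadj.reachable
  have reach : ∀ j : ZMod m, G.Reachable none (some j) := by
    intro j
    obtain ⟨s₀, hs₀⟩ := hS
    apply key (((j - s₀) * d).val) j
    have hcast : ((((j - s₀) * d).val : ℕ) : ZMod m) = (j - s₀) * d := by
      rw [ZMod.natCast_val, ZMod.cast_id]
    rw [hcast]
    have : j - (j - s₀) * d * d = s₀ := by linear_combination (s₀ - j) * hdd
    rw [this]; exact hs₀
  constructor
  intro u v
  match u, v with
  | none, none => exact SimpleGraph.Reachable.refl none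
  | none, some j => exact reach j
  | some j, none => exact (reach j).symm
  | some j, some k => exact (reach j).symm.trans (reach k)

lemma redSet_acyclic (hm : 3 ≤ m) {S : Set (ZMod m)} {c d : ZMod m} (hdd : d * d = 1)
    (hS : S.Nonempty)
    (hchar : ∀ e, e ∈ redSet m S c ↔ ((∃ i, i ∈ S ∧ e = spokeE m i) ∨
      (∃ x, x + d ∉ S ∧ e = s((some x : Option (ZMod m)), some (x + d))))) :
    (SimpleGraph.fromEdgeSet (redSet m S c)).IsAcyclic := by
  classical
  haveI : NeZero m := ⟨by omega⟩
  set G := SimpleGraph.fromEdgeSet (redSet m S c) with hG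
  rw [SimpleGraph.isAcyclic_iff_forall_adj_isBridge]
  intro v w hadj
  have hvw : s(v, w) ∈ redSet m S c ∧ v ≠ w := by
    rwa [hG, SimpleGraph.fromEdgeSet_adj] at hadj
  rw [SimpleGraph.isBridge_iff]
  refine ?_
  set G' := G \ SimpleGraph.fromEdgeSet {s(v, w)} with hG'
  have hadj' : ∀ a b, G'.Adj a b → s(a, b) ∈ redSet m S c ∧ s(a, b) ≠ s(v, w) := by
    intro a b h
    rw [hG', SimpleGraph.sdiff_adj, hG, SimpleGraph.fromEdgeSet_adj,
      SimpleGraph.fromEdgeSet_adj] at h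
    obtain ⟨⟨h1, h2⟩, h3⟩ := h
    refine ⟨h1, fun hh => h3 ⟨by simpa using hh, h2⟩⟩
  rcases (hchar s(v, w)).1 hvw.1 with ⟨i, hiS, heq⟩ | ⟨x₀, hx₀d, heq⟩
  · -- spoke bridge
    set B : Set (ZMod m) :=
      {x | ∃ t : ℕ, x = i + (t : ZMod m) * d ∧
        ∀ u : ℕ, 0 < u → u ≤ t → i + (u : ZMod m) * d ∉ S} with hB
    set A : Set (Option (ZMod m)) := some '' B with hA
    have hnoneA : none ∉ A := by simp [hA]
    have hsomeA : ∀ y : ZMod m, some y ∈ A ↔ y ∈ B := by simp [hA]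
    have hiB : i ∈ B := ⟨0, by simp, by intro u hu hu0; omega⟩
    have hSB : ∀ x ∈ B, x ∈ S → x = i := by
      rintro x ⟨t, rfl, hcond⟩ hxS
      rcases Nat.eq_zero_or_pos t with rfl | ht
      · simp
      · exact absurd hxS (hcond t ht le_rfl)
    have hstepB : ∀ x : ZMod m, x + d ∉ S → (x ∈ B ↔ x + d ∈ B) := by
      intro x hxd
      constructor
      · rintro ⟨t, rfl, hcond⟩
        refine ⟨t + 1, by push_cast; ring, ?_⟩
        intro u hu hut
        rcases Nat.lt_or_ge u (t + 1) with h | h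
        · exact hcond u hu (by omega)
        · have : u = t + 1 := by omega
          subst this
          have : i + ((t + 1 : ℕ) : ZMod m) * d = i + (t : ZMod m) * d + d := by
            push_cast; ring
          rw [this]; exact hxd
      · rintro ⟨t', heq', hcond⟩
        rcases Nat.eq_zero_or_pos t' with rfl | ht'
        · exfalso
          simp only [Nat.cast_zero, zero_mul, add_zero] at heq'
          exact hxd (heq' ▸ hiS)
        · obtain ⟨k, rfl⟩ := Nat.exists_eq_succ_of_ne_zero (by omega : t' ≠ 0)
          refine ⟨k, ?_, fun u hu hut => hcond u hu (by omega)⟩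
          have : ((k + 1 : ℕ) : ZMod m) * d = (k : ZMod m) * d + d := by push_cast; ring
          rw [this] at heq'
          linear_combination heq'
    have hcross : ∀ a b, G'.Adj a b → (a ∈ A ↔ b ∈ A) := by
      intro a b hab
      obtain ⟨hmem, hne⟩ := hadj' a b hab
      rcases (hchar _).1 hmem with ⟨j, hjS, hj⟩ | ⟨x, hxd, hx⟩
      · have hjA : some j ∉ A := by
          rw [hsomeA]
          intro hjB
          exact hne (by rw [hj, hSB j hjB hjS, heq])
        rw [spokeE] at hj
        rw [Sym2.eq_iff] at hj
        rcases hj with ⟨rfl, rfl⟩ | ⟨rfl, rfl⟩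
        · simp [hnoneA, hjA]
        · simp [hnoneA, hjA]
      · rw [Sym2.eq_iff] at hx
        rcases hx with ⟨rfl, rfl⟩ | ⟨rfl, rfl⟩
        · rw [hsomeA, hsomeA]; exact hstepB x hxd
        · rw [hsomeA, hsomeA]; exact (hstepB x hxd).symm
    have hvw_shape : (v = none ∧ w = some i) ∨ (v = some i ∧ w = none) := by
      rw [spokeE] at heq
      rw [Sym2.eq_iff] at heq
      tauto
    rcases hvw_shape with ⟨rfl, rfl⟩ | ⟨rfl, rfl⟩
    · intro h
      exact cut_not_reachable hcross ((hsomeA i).2 hiB) hnoneA h.symm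
    · exact cut_not_reachable hcross ((hsomeA i).2 hiB) hnoneA
  · -- rim bridge
    set a₀ : ZMod m := x₀ + d with ha₀
    set B : Set (ZMod m) :=
      {x | ∃ t : ℕ, x = a₀ + (t : ZMod m) * d ∧
        ∀ u : ℕ, u ≤ t → a₀ + (u : ZMod m) * d ∉ S} with hB
    set A : Set (Option (ZMod m)) := some '' B with hA
    have hnoneA : none ∉ A := by simp [hA]
    have hsomeA : ∀ y : ZMod m, some y ∈ A ↔ y ∈ B := by simp [hA]
    have ha₀B : a₀ ∈ B := by
      refine ⟨0, by simp, ?_⟩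
      intro u hu
      have : u = 0 := by omega
      subst this
      simpa using hx₀d
    have hSB : ∀ x ∈ B, x ∉ S := by
      rintro x ⟨t, rfl, hcond⟩
      exact hcond t le_rfl
    have hx₀B : x₀ ∉ B := by
      rintro ⟨t, heq', hcond⟩
      have h0 : ((t + 1 : ℕ) : ZMod m) * d = 0 := by
        push_cast
        linear_combination -heq'
      have h1 : ((t + 1 : ℕ) : ZMod m) = 0 := by
        calc ((t + 1 : ℕ) : ZMod m) = ((t + 1 : ℕ) : ZMod m) * (d * d) := by rw [hdd]; ring
        _ = (((t + 1 : ℕ) : ZMod m) * d) * d := by ring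
        _ = 0 := by rw [h0, zero_mul]
      have hdvd : m ∣ t + 1 := (ZMod.natCast_eq_zero_iff _ _).1 h1
      have hmt : m ≤ t + 1 := Nat.le_of_dvd (by omega) hdvd
      exact full_cover hm hdd hS a₀ t hmt hcond
    have hstepB : ∀ x : ZMod m, x + d ∉ S → x ≠ x₀ → (x ∈ B ↔ x + d ∈ B) := by
      intro x hxd hxne
      constructor
      · rintro ⟨t, rfl, hcond⟩
        refine ⟨t + 1, by push_cast; ring, ?_⟩
        intro u hut
        rcases Nat.lt_or_ge u (t + 1) with h | h
        · exact hcond u (by omega)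
        · have : u = t + 1 := by omega
          subst this
          have : a₀ + ((t + 1 : ℕ) : ZMod m) * d = a₀ + (t : ZMod m) * d + d := by
            push_cast; ring
          rw [this]; exact hxd
      · rintro ⟨t', heq', hcond⟩
        rcases Nat.eq_zero_or_pos t' with rfl | ht'
        · exfalso
          simp only [Nat.cast_zero, zero_mul, add_zero] at heq'
          apply hxne
          have : x + d = x₀ + d := by rw [heq']
          linear_combination this
        · obtain ⟨k, rfl⟩ := Nat.exists_eq_succ_of_ne_zero (by omega : t' ≠ 0)
          refine ⟨k, ?_, fun u hut => hcond u (by omega)⟩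
          have : ((k + 1 : ℕ) : ZMod m) * d = (k : ZMod m) * d + d := by push_cast; ring
          rw [this] at heq'
          linear_combination heq'
    have hcross : ∀ a b, G'.Adj a b → (a ∈ A ↔ b ∈ A) := by
      intro a b hab
      obtain ⟨hmem, hne⟩ := hadj' a b hab
      rcases (hchar _).1 hmem with ⟨j, hjS, hj⟩ | ⟨x, hxd, hx⟩
      · have hjA : some j ∉ A := by
          rw [hsomeA]
          intro hjB
          exact hSB j hjB hjS
        rw [spokeE] at hj
        rw [Sym2.eq_iff] at hj
        rcases hj with ⟨rfl, rfl⟩ | ⟨rfl, rfl⟩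
        · simp [hnoneA, hjA]
        · simp [hnoneA, hjA]
      · have hxne : x ≠ x₀ := by
          intro hxx
          apply hne
          rw [hx, heq, hxx]
        rw [Sym2.eq_iff] at hx
        rcases hx with ⟨rfl, rfl⟩ | ⟨rfl, rfl⟩
        · rw [hsomeA, hsomeA]; exact hstepB x hxd hxne
        · rw [hsomeA, hsomeA]; exact (hstepB x hxd hxne).symm
    have hvw_shape : (v = some x₀ ∧ w = some a₀) ∨ (v = some a₀ ∧ w = some x₀) := by
      rw [Sym2.eq_iff] at heq
      rcases heq with ⟨h1, h2⟩ | ⟨h1, h2⟩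
      · exact Or.inl ⟨h1, h2⟩
      · exact Or.inr ⟨h1, h2⟩
    have hx₀A : some x₀ ∉ A := by rw [hsomeA]; exact hx₀B
    rcases hvw_shape with ⟨rfl, rfl⟩ | ⟨rfl, rfl⟩
    · intro h
      exact cut_not_reachable hcross ((hsomeA a₀).2 ha₀B) hx₀A h.symm
    · exact cut_not_reachable hcross ((hsomeA a₀).2 ha₀B) hx₀A


-- ## Part 3 : redSet is a tree, coloring, step identities

lemma redSet_isTreeSet (hm : 3 ≤ m) {S : Set (ZMod m)} {c : ZMod m} (hc : c = 0 ∨ c = 1)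
    (hS : S.Nonempty) : IsTreeSet m (redSet m S c) := by
  rcases hc with rfl | rfl
  · -- c = 0, d = -1
    have hdd : (-1 : ZMod m) * (-1) = 1 := by ring
    have hchar : ∀ e, e ∈ redSet m S 0 ↔ ((∃ i, i ∈ S ∧ e = spokeE m i) ∨
        (∃ x, x + (-1) ∉ S ∧ e = s((some x : Option (ZMod m)), some (x + (-1))))) := by
      intro e
      constructor
      · rintro ⟨i, ⟨hi, rfl⟩ | ⟨hi, rfl⟩⟩
        · exact Or.inl ⟨i, hi, rfl⟩
        · refine Or.inr ⟨i + 1, ?_, ?_⟩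
          · have h1 : i + 1 + (-1) = i := by ring
            rw [h1]; simpa using hi
          · have h1 : i + 1 + (-1) = i := by ring
            rw [h1]; exact Sym2.eq_swap
      · rintro (⟨i, hi, rfl⟩ | ⟨x, hx, rfl⟩)
        · exact ⟨i, Or.inl ⟨hi, rfl⟩⟩
        · refine ⟨x - 1, Or.inr ⟨?_, ?_⟩⟩
          · have h1 : x - 1 + 0 = x + (-1) := by ring
            rw [h1]; exact hx
          · have h1 : x - 1 + 1 = x := by ring
            rw [rimE, h1]
            have h2 : x + (-1) = x - 1 := by ring
            rw [h2]; exact Sym2.eq_swap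
    refine ⟨redSet_subset hm S 0, ?_, redSet_acyclic hm hdd hS hchar⟩
    apply redSet_connected hm hdd hS
    · intro i hi; exact spokeE_mem_redSet.2 hi
    · intro x hx; exact (hchar _).2 (Or.inr ⟨x, hx, rfl⟩)
  · -- c = 1, d = 1
    have hdd : (1 : ZMod m) * 1 = 1 := by ring
    have hchar : ∀ e, e ∈ redSet m S 1 ↔ ((∃ i, i ∈ S ∧ e = spokeE m i) ∨
        (∃ x, x + 1 ∉ S ∧ e = s((some x : Option (ZMod m)), some (x + 1)))) := by
      intro e
      constructor
      · rintro ⟨i, ⟨hi, rfl⟩ | ⟨hi, rfl⟩⟩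
        · exact Or.inl ⟨i, hi, rfl⟩
        · exact Or.inr ⟨i, hi, rfl⟩
      · rintro (⟨i, hi, rfl⟩ | ⟨x, hx, rfl⟩)
        · exact ⟨i, Or.inl ⟨hi, rfl⟩⟩
        · exact ⟨x, Or.inr ⟨hx, rfl⟩⟩
    refine ⟨redSet_subset hm S 1, ?_, redSet_acyclic hm hdd hS hchar⟩
    apply redSet_connected hm hdd hS
    · intro i hi; exact spokeE_mem_redSet.2 hi
    · intro x hx; exact (hchar _).2 (Or.inr ⟨x, hx, rfl⟩)

lemma col_isColoring (hm : 3 ≤ m) {S : Set (ZMod m)} {c : ZMod m} (hc : c = 0 ∨ c = 1)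
    (hS : S.Nonempty) (hSc : Sᶜ.Nonempty) :
    IsWheelColoring m (redSet m S c, redSet m Sᶜ c) :=
  ⟨redSet_isTreeSet hm hc hS, redSet_isTreeSet hm hc hSc, redSet_disjoint hm S c,
    redSet_union hm S c⟩

lemma insert_spoke_eq (hm : 3 ≤ m) {T : Set (ZMod m)} {c i : ZMod m} :
    insert (spokeE m i) (redSet m T c \ {rimE m (i - c)}) = redSet m (insert i T) c := by
  have hic : i - c + c = i := by ring
  ext e
  simp only [Set.mem_insert_iff, Set.mem_diff, Set.mem_singleton_iff]
  constructor
  · rintro (rfl | ⟨he, hne⟩)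
    · exact spokeE_mem_redSet.2 (Set.mem_insert i T)
    · obtain ⟨j, rfl | rfl⟩ := mem_redSet_shape he
      · exact spokeE_mem_redSet.2 (Set.mem_insert_of_mem _ (spokeE_mem_redSet.1 he))
      · refine (rimE_mem_redSet hm).2 ?_
        have hj := (rimE_mem_redSet hm).1 he
        intro hmem
        rcases hmem with h | h
        · apply hne
          have : j = i - c := by rw [← h]; ring
          rw [this]
        · exact hj h
  · intro he
    obtain ⟨j, rfl | rfl⟩ := mem_redSet_shape he
    · have hj := spokeE_mem_redSet.1 he
      rcases hj with rfl | hj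
      · exact Or.inl rfl
      · exact Or.inr ⟨spokeE_mem_redSet.2 hj, spokeE_ne_rimE⟩
    · have hj := (rimE_mem_redSet hm).1 he
      refine Or.inr ⟨(rimE_mem_redSet hm).2 (fun h => hj (Set.mem_insert_of_mem _ h)), ?_⟩
      intro h
      apply hj
      have : j = i - c := rimE_inj hm h
      rw [this, hic]
      exact Set.mem_insert i T

lemma insert_rim_eq (hm : 3 ≤ m) {S : Set (ZMod m)} {c i : ZMod m} :
    insert (rimE m (i - c)) (redSet m S c \ {spokeE m i}) = redSet m (S \ {i}) c := by
  have hic : i - c + c = i := by ring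
  ext e
  simp only [Set.mem_insert_iff, Set.mem_diff, Set.mem_singleton_iff]
  constructor
  · rintro (rfl | ⟨he, hne⟩)
    · refine (rimE_mem_redSet hm).2 ?_
      rw [hic]; simp
    · obtain ⟨j, rfl | rfl⟩ := mem_redSet_shape he
      · have hj := spokeE_mem_redSet.1 he
        refine spokeE_mem_redSet.2 ⟨hj, ?_⟩
        intro h
        exact hne (by rw [Set.mem_singleton_iff.1 h])
      · have hj := (rimE_mem_redSet hm).1 he
        exact (rimE_mem_redSet hm).2 (fun h => hj h.1)
  · intro he
    obtain ⟨j, rfl | rfl⟩ := mem_redSet_shape he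
    · have hj := spokeE_mem_redSet.1 he
      refine Or.inr ⟨spokeE_mem_redSet.2 hj.1, ?_⟩
      intro h
      exact hj.2 (Set.mem_singleton_iff.2 (spokeE_inj h))
    · have hj := (rimE_mem_redSet hm).1 he
      by_cases hji : j + c = i
      · left
        have : j = i - c := by rw [← hji]; ring
        rw [this]
      · refine Or.inr ⟨(rimE_mem_redSet hm).2 ?_, spokeE_ne_rimE.symm⟩
        intro h
        exact hj ⟨h, hji⟩

lemma compl_diff_singleton {S : Set (ZMod m)} {i : ZMod m} :
    (S \ {i})ᶜ = insert i Sᶜ := by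
  ext j; by_cases h : j = i <;> simp [h]

lemma compl_insert' {S : Set (ZMod m)} {i : ZMod m} :
    (insert i S)ᶜ = Sᶜ \ {i} := by
  ext j; by_cases h : j = i <;> simp [h]


-- ## Part 4 : classification

lemma no_triangle (hm : 3 ≤ m) {T : Set (Sym2 (Option (ZMod m)))} (hT : IsTreeSet m T)
    {i : ZMod m} (h1 : spokeE m i ∈ T) (h2 : spokeE m (i + 1) ∈ T) : rimE m i ∉ T := by
  intro h3
  set G := SimpleGraph.fromEdgeSet T with hG
  have hne : (some i : Option (ZMod m)) ≠ some (i + 1) := by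
    simp only [Ne, Option.some.injEq]
    intro h
    exact one_ne hm (by linear_combination -h)
  have a1 : G.Adj none (some i) := by
    rw [hG, SimpleGraph.fromEdgeSet_adj]; exact ⟨h1, by simp⟩
  have a2 : G.Adj (some i) (some (i + 1)) := by
    rw [hG, SimpleGraph.fromEdgeSet_adj]; exact ⟨h3, hne⟩
  have a3 : G.Adj none (some (i + 1)) := by
    rw [hG, SimpleGraph.fromEdgeSet_adj]; exact ⟨h2, by simp⟩
  have hq : (SimpleGraph.Walk.cons a1 (SimpleGraph.Walk.cons a2 SimpleGraph.Walk.nil)).IsPath := by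
    simp only [SimpleGraph.Walk.isPath_def, SimpleGraph.Walk.support_cons,
      SimpleGraph.Walk.support_nil]
    simp [hne]
  have hacyc := hT.2.2
  rw [SimpleGraph.isAcyclic_iff_path_unique] at hacyc
  have := hacyc (SimpleGraph.Path.singleton a3) ⟨_, hq⟩
  have hlen := congrArg (fun p : G.Path none (some (i + 1)) => p.1.length) this
  simp [SimpleGraph.Path.singleton] at hlen

lemma exists_spoke_mem (hm : 3 ≤ m) {T : Set (Sym2 (Option (ZMod m)))} (hT : IsTreeSet m T) :
    ∃ i, spokeE m i ∈ T := by
  have hconn := hT.2.1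
  obtain ⟨w⟩ := hconn.preconnected none (some 0)
  cases w with
  | cons h w' =>
    rename_i v
    rw [SimpleGraph.fromEdgeSet_adj] at h
    obtain ⟨hmem, hne⟩ := h
    match v, hmem, hne with
    | none, _, hne => exact absurd rfl hne
    | some j, hmem, _ => exact ⟨j, hmem⟩

lemma classify (hm : 3 ≤ m) {c : ZMod m} (hc : c = 0 ∨ c = 1)
    {P : Set (Sym2 (Option (ZMod m))) × Set (Sym2 (Option (ZMod m)))}
    (hcol : IsWheelColoring m P)
    (hori : ∀ i, (spokeE m i ∈ P.1 ↔ spokeE m (i + 1) ∈ P.1) ∨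
      (rimE m i ∈ P.1 ↔ spokeE m (i + 1 - c) ∈ P.1)) :
    ∃ S : Set (ZMod m), S.Nonempty ∧ Sᶜ.Nonempty ∧
      P.1 = redSet m S c ∧ P.2 = redSet m Sᶜ c := by
  obtain ⟨hT1, hT2, hdisj, hunion⟩ := hcol
  set S : Set (ZMod m) := {i | spokeE m i ∈ P.1} with hSdef
  have part : ∀ e ∈ (wheelGraph m).edgeSet, e ∉ P.1 → e ∈ P.2 := by
    intro e he hne
    have : e ∈ P.1 ∪ P.2 := hunion ▸ he
    rw [Set.mem_union] at this
    tauto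
  have disj1 : ∀ e ∈ P.1, e ∉ P.2 := fun e he => Set.disjoint_left.1 hdisj he
  have rim_in : ∀ j : ZMod m, (rimE m j ∈ P.1 ↔ spokeE m (j + c) ∉ P.1) := by
    intro j
    by_cases hj : spokeE m j ∈ P.1 <;> by_cases hj1 : spokeE m (j + 1) ∈ P.1
    · -- both spokes red: rim blue
      have hrim : rimE m j ∉ P.1 := no_triangle hm hT1 hj hj1
      have hjc : spokeE m (j + c) ∈ P.1 := by
        rcases hc with rfl | rfl
        · simpa using hj
        · simpa using hj1
      constructor
      · intro h; exact absurd h hrim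
      · intro h; exact absurd hjc h
    · -- j red, j+1 blue : boundary
      have hbd : rimE m j ∈ P.1 ↔ spokeE m (j + 1 - c) ∈ P.1 := by
        rcases hori j with h | h
        · exact absurd (h.1 hj) hj1
        · exact h
      rcases hc with rfl | rfl
      · have h1 : j + 1 - 0 = j + 1 := by ring
        have h2 : j + 0 = j := by ring
        rw [h1] at hbd
        rw [h2]
        simp [hbd, hj1, hj]
      · have h1 : j + 1 - 1 = j := by ring
        rw [h1] at hbd
        simp [hbd, hj, hj1]
    · -- j blue, j+1 red : boundary
      have hbd : rimE m j ∈ P.1 ↔ spokeE m (j + 1 - c) ∈ P.1 := by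
        rcases hori j with h | h
        · exact absurd (h.2 hj1) hj
        · exact h
      rcases hc with rfl | rfl
      · have h1 : j + 1 - 0 = j + 1 := by ring
        have h2 : j + 0 = j := by ring
        rw [h1] at hbd
        rw [h2]
        simp [hbd, hj1, hj]
      · have h1 : j + 1 - 1 = j := by ring
        rw [h1] at hbd
        simp [hbd, hj, hj1]
    · -- both spokes blue : rim red
      have hb1 : spokeE m j ∈ P.2 := part _ (spokeE_mem_edgeSet j) hj
      have hb2 : spokeE m (j + 1) ∈ P.2 := part _ (spokeE_mem_edgeSet (j + 1)) hj1
      have hrim2 : rimE m j ∉ P.2 := no_triangle hm hT2 hb1 hb2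
      have hrim : rimE m j ∈ P.1 := by
        by_contra h
        exact hrim2 (part _ (rimE_mem_edgeSet hm j) h)
      have hjc : spokeE m (j + c) ∉ P.1 := by
        rcases hc with rfl | rfl
        · simpa using hj
        · simpa using hj1
      simp [hrim, hjc]
  have hP1 : P.1 = redSet m S c := by
    ext e
    constructor
    · intro he
      obtain ⟨j, rfl | rfl⟩ := edge_shape (hT1.1 he)
      · exact spokeE_mem_redSet.2 he
      · exact (rimE_mem_redSet hm).2 ((rim_in j).1 he)
    · intro he
      obtain ⟨j, rfl | rfl⟩ := mem_redSet_shape he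
      · exact spokeE_mem_redSet.1 he
      · exact (rim_in j).2 ((rimE_mem_redSet hm).1 he)
  have hP2 : P.2 = redSet m Sᶜ c := by
    ext e
    constructor
    · intro he
      have hes : e ∈ (wheelGraph m).edgeSet := hT2.1 he
      have : e ∈ redSet m S c ∪ redSet m Sᶜ c := (redSet_union hm S c).symm ▸ hes
      rcases this with h | h
      · exact absurd he (fun hh => disj1 e (hP1 ▸ h) hh)
      · exact h
    · intro he
      have hes : e ∈ (wheelGraph m).edgeSet := redSet_subset hm Sᶜ c he
      have hne1 : e ∉ P.1 := by
        rw [hP1]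
        exact fun h => Set.disjoint_left.1 (redSet_disjoint hm S c) h he
      exact part _ hes hne1
  have hSne : S.Nonempty := by
    obtain ⟨i, hi⟩ := exists_spoke_mem hm hT1
    exact ⟨i, hi⟩
  have hScne : Sᶜ.Nonempty := by
    obtain ⟨i, hi⟩ := exists_spoke_mem hm hT2
    exact ⟨i, fun h => disj1 _ h hi⟩
  exact ⟨S, hSne, hScne, hP1, hP2⟩


-- ## Part 5 : greedy choice and the exchange recursion

open Classical in
noncomputable def actPair (m : ℕ) (S₂ : Set (ZMod m)) (c : ZMod m) (i : ZMod m) :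
    Sym2 (Option (ZMod m)) × Sym2 (Option (ZMod m)) :=
  if i ∈ S₂ then (rimE m (i - c), spokeE m i) else (spokeE m i, rimE m (i - c))

lemma WExchSeq_nil {P Q : Set (Sym2 (Option (ZMod m))) × Set (Sym2 (Option (ZMod m)))}
    (h : P = Q) : WExchSeq m P [] Q := h

lemma WExchSeq_cons {P Q : Set (Sym2 (Option (ZMod m))) × Set (Sym2 (Option (ZMod m)))}
    {e f : Sym2 (Option (ZMod m))} {L : List (Sym2 (Option (ZMod m)) × Sym2 (Option (ZMod m)))}
    (h : ∃ P' : Set (Sym2 (Option (ZMod m))) × Set (Sym2 (Option (ZMod m))),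
      e ∈ P.1 ∧ f ∈ P.2 ∧
      P'.1 = insert f (P.1 \ {e}) ∧ P'.2 = insert e (P.2 \ {f}) ∧
      IsWheelColoring m P' ∧ WExchSeq m P' L Q) :
    WExchSeq m P ((e, f) :: L) Q := h

lemma card_zmod' (hm : 3 ≤ m) {S : Set (ZMod m)} : S.ncard + Sᶜ.ncard = m := by
  haveI : NeZero m := ⟨by omega⟩
  rw [Set.ncard_add_ncard_compl, Nat.card_zmod]

lemma greedy (hm : 3 ≤ m) {S S₂ : Set (ZMod m)} (hS : S.Nonempty) (hSc : Sᶜ.Nonempty)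
    (hS₂ : S₂.Nonempty) (hS₂c : S₂ᶜ.Nonempty) (hne : S ≠ S₂) :
    ∃ i, (i ∈ S₂ ∧ i ∉ S ∧ (insert i S)ᶜ.Nonempty) ∨
      (i ∉ S₂ ∧ i ∈ S ∧ (S \ {i}).Nonempty) := by
  by_cases hadd : ∃ i, i ∈ S₂ ∧ i ∉ S ∧ insert i S ≠ univ
  · obtain ⟨i, h1, h2, h3⟩ := hadd
    exact ⟨i, Or.inl ⟨h1, h2, Set.nonempty_compl.2 h3⟩⟩
  · push_neg at hadd
    by_cases hd : (S₂ \ S).Nonempty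
    · obtain ⟨i₀, hi₀2, hi₀S⟩ := hd
      have huniv : insert i₀ S = univ := hadd i₀ hi₀2 hi₀S
      have hScompl : Sᶜ = {i₀} := by
        ext x
        constructor
        · intro hx
          have : x ∈ insert i₀ S := huniv ▸ Set.mem_univ x
          rcases this with h | h
          · exact h
          · exact absurd h hx
        · rintro rfl; exact hi₀S
      have hSsub : ¬ S ⊆ S₂ := by
        intro hsub
        apply Set.nonempty_compl.1 hS₂c
        apply Set.eq_univ_of_univ_subset
        rw [← huniv]
        exact Set.insert_subset hi₀2 hsub
      obtain ⟨i, hiS, hiS₂⟩ := Set.not_subset.1 hSsub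
      refine ⟨i, Or.inr ⟨hiS₂, hiS, ?_⟩⟩
      rw [Set.nonempty_iff_ne_empty]
      intro hempty
      have hsub : S ⊆ {i} := Set.diff_eq_empty.1 hempty
      have h1 : S.ncard ≤ 1 := by
        have := Set.ncard_le_ncard hsub (Set.toFinite _)
        simpa using this
      have h2 : Sᶜ.ncard = 1 := by rw [hScompl]; simp
      have := card_zmod' hm (S := S)
      omega
    · have hsub : S₂ ⊆ S := Set.diff_eq_empty.1 (Set.not_nonempty_iff_eq_empty.1 hd)
      have hSsub : ¬ S ⊆ S₂ := fun h => hne (Set.Subset.antisymm h hsub)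
      obtain ⟨i, hiS, hiS₂⟩ := Set.not_subset.1 hSsub
      refine ⟨i, Or.inr ⟨hiS₂, hiS, ?_⟩⟩
      obtain ⟨j, hj⟩ := hS₂
      exact ⟨j, hsub hj, fun h => hiS₂ (Set.mem_singleton_iff.1 h ▸ hj)⟩

lemma symmDiff_insert_eq {S S₂ : Set (ZMod m)} {i : ZMod m} (hi2 : i ∈ S₂) (hiS : i ∉ S) :
    (insert i S) ∆ S₂ = (S ∆ S₂) \ {i} := by
  ext j
  by_cases h : j = i
  · subst h
    simp [Set.mem_symmDiff, hi2, hiS]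
  · simp only [Set.mem_symmDiff, Set.mem_insert_iff, Set.mem_diff, Set.mem_singleton_iff, h]
    tauto

lemma symmDiff_remove_eq {S S₂ : Set (ZMod m)} {i : ZMod m} (hi2 : i ∉ S₂) (hiS : i ∈ S) :
    (S \ {i}) ∆ S₂ = (S ∆ S₂) \ {i} := by
  ext j
  by_cases h : j = i
  · subst h
    simp [Set.mem_symmDiff, hi2, hiS]
  · simp only [Set.mem_symmDiff, Set.mem_diff, Set.mem_singleton_iff, h]
    tauto

lemma go (hm : 3 ≤ m) {c : ZMod m} (hc : c = 0 ∨ c = 1) {S₂ : Set (ZMod m)}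
    (hS₂ : S₂.Nonempty) (hS₂c : S₂ᶜ.Nonempty) :
    ∀ n : ℕ, ∀ S : Set (ZMod m), S.Nonempty → Sᶜ.Nonempty → (S ∆ S₂).ncard = n →
    ∃ I : List (ZMod m), I.Nodup ∧ (∀ i ∈ I, i ∈ S ∆ S₂) ∧ I.length = n ∧
      WExchSeq m (redSet m S c, redSet m Sᶜ c) (I.map (actPair m S₂ c))
        (redSet m S₂ c, redSet m S₂ᶜ c) := by
  haveI : NeZero m := ⟨by omega⟩
  intro n
  induction n with
  | zero =>
    intro S hS hSc hcard
    have hempty : S ∆ S₂ = ∅ := (Set.ncard_eq_zero (Set.toFinite _)).1 hcard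
    have hSS : S = S₂ := by
      rwa [← Set.bot_eq_empty, symmDiff_eq_bot] at hempty
    subst hSS
    exact ⟨[], List.nodup_nil, by simp, rfl, WExchSeq_nil rfl⟩
  | succ n ih =>
    intro S hS hSc hcard
    have hne : S ≠ S₂ := by
      rintro rfl
      rw [symmDiff_self, Set.bot_eq_empty, Set.ncard_empty] at hcard
      omega
    obtain ⟨i, hcase⟩ := greedy hm hS hSc hS₂ hS₂c hne
    have hic : i - c + c = i := by ring
    rcases hcase with ⟨hi2, hiS, hproper⟩ | ⟨hi2, hiS, hne'⟩
    · -- addition step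
      set S' : Set (ZMod m) := insert i S with hS'def
      have hmem_i : i ∈ S ∆ S₂ := Set.mem_symmDiff.2 (Or.inr ⟨hi2, hiS⟩)
      have hsd : S' ∆ S₂ = (S ∆ S₂) \ {i} := symmDiff_insert_eq hi2 hiS
      have hcard' : (S' ∆ S₂).ncard = n := by
        rw [hsd, Set.ncard_diff_singleton_of_mem hmem_i, hcard]
        omega
      obtain ⟨I', hnd, hsub, hlen, hseq⟩ :=
        ih S' (Set.insert_nonempty i S) hproper hcard'
      refine ⟨i :: I', ?_, ?_, by simp [hlen], ?_⟩
      · refine List.nodup_cons.2 ⟨?_, hnd⟩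
        intro hmem
        have := hsub i hmem
        rw [hsd] at this
        exact this.2 rfl
      · intro j hj
        rcases List.mem_cons.1 hj with rfl | hj'
        · exact hmem_i
        · have := hsub j hj'
          rw [hsd] at this
          exact this.1
      · rw [List.map_cons]
        have hact : actPair m S₂ c i = (rimE m (i - c), spokeE m i) := if_pos hi2
        rw [hact]
        apply WExchSeq_cons
        refine ⟨(redSet m S' c, redSet m S'ᶜ c), ?_, ?_, ?_, ?_, ?_, hseq⟩
        · exact (rimE_mem_redSet hm).2 (by rw [hic]; exact hiS)
        · exact spokeE_mem_redSet.2 hiS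
        · exact (insert_spoke_eq hm).symm
        · show redSet m S'ᶜ c = _
          rw [hS'def, compl_insert']
          exact (insert_rim_eq hm).symm
        · exact col_isColoring hm hc (Set.insert_nonempty i S) hproper
    · -- removal step
      set S' : Set (ZMod m) := S \ {i} with hS'def
      have hmem_i : i ∈ S ∆ S₂ := Set.mem_symmDiff.2 (Or.inl ⟨hiS, hi2⟩)
      have hsd : S' ∆ S₂ = (S ∆ S₂) \ {i} := symmDiff_remove_eq hi2 hiS
      have hcard' : (S' ∆ S₂).ncard = n := by
        rw [hsd, Set.ncard_diff_singleton_of_mem hmem_i, hcard]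
        omega
      have hS'c : S'ᶜ.Nonempty := by
        obtain ⟨j, hj⟩ := hSc
        exact ⟨j, by rw [hS'def, compl_diff_singleton]; exact Set.mem_insert_of_mem _ hj⟩
      obtain ⟨I', hnd, hsub, hlen, hseq⟩ := ih S' hne' hS'c hcard'
      refine ⟨i :: I', ?_, ?_, by simp [hlen], ?_⟩
      · refine List.nodup_cons.2 ⟨?_, hnd⟩
        intro hmem
        have := hsub i hmem
        rw [hsd] at this
        exact this.2 rfl
      · intro j hj
        rcases List.mem_cons.1 hj with rfl | hj'
        · exact hmem_i
        · have := hsub j hj'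
          rw [hsd] at this
          exact this.1
      · rw [List.map_cons]
        have hact : actPair m S₂ c i = (spokeE m i, rimE m (i - c)) := if_neg hi2
        rw [hact]
        apply WExchSeq_cons
        refine ⟨(redSet m S' c, redSet m S'ᶜ c), ?_, ?_, ?_, ?_, ?_, hseq⟩
        · exact spokeE_mem_redSet.2 hiS
        · refine (rimE_mem_redSet hm).2 ?_
          rw [hic]
          simpa using hiS
        · exact (insert_rim_eq hm).symm
        · show redSet m S'ᶜ c = _
          rw [hS'def, compl_diff_singleton]
          exact (insert_spoke_eq hm).symm
        · exact col_isColoring hm hc hne' hS'c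


-- ## Part 6 : cardinalities

lemma spokeE_injective : Function.Injective (spokeE m) := fun _ _ h => spokeE_inj h

lemma rimE_injective (hm : 3 ≤ m) : Function.Injective (rimE m) := fun _ _ h => rimE_inj hm h

lemma shift_ncard {X : Set (ZMod m)} {c : ZMod m} : {i : ZMod m | i + c ∈ X}.ncard = X.ncard := by
  have himg : (fun i : ZMod m => i + c) '' {i : ZMod m | i + c ∈ X} = X := by
    ext x
    constructor
    · rintro ⟨i, hi, rfl⟩; exact hi
    · intro hx; exact ⟨x - c, by simpa using hx, by ring⟩
  have hinj : Function.Injective (fun i : ZMod m => i + c) := add_left_injective c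
  conv_rhs => rw [← himg]
  rw [Set.ncard_image_of_injective _ hinj]

lemma inter_card (hm : 3 ≤ m) {S T : Set (ZMod m)} {c : ZMod m} :
    (redSet m S c ∩ redSet m T c).ncard = (S ∩ T).ncard + (Sᶜ ∩ Tᶜ).ncard := by
  haveI : NeZero m := ⟨by omega⟩
  have heq : redSet m S c ∩ redSet m T c =
      (spokeE m '' (S ∩ T)) ∪ (rimE m '' {i : ZMod m | i + c ∈ Sᶜ ∩ Tᶜ}) := by
    ext e
    constructor
    · rintro ⟨he1, he2⟩
      obtain ⟨j, rfl | rfl⟩ := mem_redSet_shape he1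
      · exact Or.inl ⟨j, ⟨spokeE_mem_redSet.1 he1, spokeE_mem_redSet.1 he2⟩, rfl⟩
      · exact Or.inr ⟨j, ⟨(rimE_mem_redSet hm).1 he1, (rimE_mem_redSet hm).1 he2⟩, rfl⟩
    · rintro (⟨j, ⟨hj1, hj2⟩, rfl⟩ | ⟨j, hj, rfl⟩)
      · exact ⟨spokeE_mem_redSet.2 hj1, spokeE_mem_redSet.2 hj2⟩
      · exact ⟨(rimE_mem_redSet hm).2 hj.1, (rimE_mem_redSet hm).2 hj.2⟩
  rw [heq, Set.ncard_union_eq ?_ (Set.toFinite _) (Set.toFinite _)]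
  · rw [Set.ncard_image_of_injective _ spokeE_injective,
      Set.ncard_image_of_injective _ (rimE_injective hm)]
    congr 1
    exact shift_ncard
  · rw [Set.disjoint_left]
    rintro e ⟨j, -, rfl⟩ ⟨k, -, h⟩
    exact spokeE_ne_rimE h.symm

lemma symmDiff_card (hm : 3 ≤ m) {S T : Set (ZMod m)} :
    (S ∆ T).ncard + ((S ∩ T).ncard + (Sᶜ ∩ Tᶜ).ncard) = m := by
  haveI : NeZero m := ⟨by omega⟩
  have hcompl : (S ∆ T)ᶜ = (S ∩ T) ∪ (Sᶜ ∩ Tᶜ) := by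
    ext x
    simp only [Set.mem_compl_iff, Set.mem_symmDiff, Set.mem_union, Set.mem_inter_iff,
      Set.mem_compl_iff]
    tauto
  have hdisj : Disjoint (S ∩ T) (Sᶜ ∩ Tᶜ) := by
    rw [Set.disjoint_left]
    rintro x ⟨hx, -⟩ ⟨hx', -⟩
    exact hx' hx
  have h1 := card_zmod' hm (S := S ∆ T)
  rw [hcompl, Set.ncard_union_eq hdisj (Set.toFinite _) (Set.toFinite _)] at h1
  exact h1

-- ## Part 7 : assembling the pieces

lemma fst_actPair_injective (hm : 3 ≤ m) {S₂ : Set (ZMod m)} {c : ZMod m} :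
    Function.Injective (fun i => (actPair m S₂ c i).1) := by
  classical
  intro a b h
  simp only [actPair] at h
  by_cases ha : a ∈ S₂ <;> by_cases hb : b ∈ S₂ <;> simp [ha, hb] at h
  · have := rimE_inj hm h
    linear_combination this
  · exact absurd h.symm spokeE_ne_rimE
  · exact absurd h spokeE_ne_rimE
  · exact spokeE_inj h

lemma snd_actPair_injective (hm : 3 ≤ m) {S₂ : Set (ZMod m)} {c : ZMod m} :
    Function.Injective (fun i => (actPair m S₂ c i).2) := by
  classical
  intro a b h
  simp only [actPair] at h
  by_cases ha : a ∈ S₂ <;> by_cases hb : b ∈ S₂ <;> simp [ha, hb] at h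
  · exact spokeE_inj h
  · exact absurd h spokeE_ne_rimE
  · exact absurd h.symm spokeE_ne_rimE
  · have := rimE_inj hm h
    linear_combination this

lemma fst_snd_actPair_ne (hm : 3 ≤ m) {S₂ : Set (ZMod m)} {c : ZMod m} (i j : ZMod m) :
    (actPair m S₂ c i).1 ≠ (actPair m S₂ c j).2 := by
  classical
  intro h
  simp only [actPair] at h
  by_cases ha : i ∈ S₂ <;> by_cases hb : j ∈ S₂ <;> simp [ha, hb] at h
  · exact spokeE_ne_rimE h.symm
  · have := rimE_inj hm h
    have hij : i = j := by linear_combination this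
    subst hij
    exact hb ha
  · have := spokeE_inj h
    subst this
    exact ha hb
  · exact spokeE_ne_rimE h


lemma main_core (hm : 3 ≤ m) {c : ZMod m} (hc : c = 0 ∨ c = 1)
    {P₁ P₂ : Set (Sym2 (Option (ZMod m))) × Set (Sym2 (Option (ZMod m)))}
    (h₁ : IsWheelColoring m P₁) (h₂ : IsWheelColoring m P₂)
    (hori₁ : ∀ i, (spokeE m i ∈ P₁.1 ↔ spokeE m (i + 1) ∈ P₁.1) ∨
      (rimE m i ∈ P₁.1 ↔ spokeE m (i + 1 - c) ∈ P₁.1))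
    (hori₂ : ∀ i, (spokeE m i ∈ P₂.1 ↔ spokeE m (i + 1) ∈ P₂.1) ∨
      (rimE m i ∈ P₂.1 ↔ spokeE m (i + 1 - c) ∈ P₂.1)) :
    ∃ L, WExchSeq m P₁ L P₂ ∧
      L.length = m - (P₁.1 ∩ P₂.1).ncard ∧
      (∀ p ∈ L, p.1 ∈ P₁.1 ∩ P₂.2 ∧ p.2 ∈ P₁.2 ∩ P₂.1) ∧
      (L.map Prod.fst ++ L.map Prod.snd).Nodup := by
  classical
  obtain ⟨S₁, hS₁, hS₁c, hP11, hP12⟩ := classify hm hc h₁ hori₁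
  obtain ⟨S₂, hS₂, hS₂c, hP21, hP22⟩ := classify hm hc h₂ hori₂
  have hP₁ : P₁ = (redSet m S₁ c, redSet m S₁ᶜ c) := Prod.ext hP11 hP12
  have hP₂ : P₂ = (redSet m S₂ c, redSet m S₂ᶜ c) := Prod.ext hP21 hP22
  obtain ⟨I, hnd, hsub, hlen, hseq⟩ := go hm hc hS₂ hS₂c ((S₁ ∆ S₂).ncard) S₁ hS₁ hS₁c rfl
  refine ⟨I.map (actPair m S₂ c), ?_, ?_, ?_, ?_⟩
  · rw [hP₁, hP₂]
    exact hseq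
  · rw [List.length_map, hlen, hP11, hP21, inter_card hm]
    have := symmDiff_card hm (S := S₁) (T := S₂)
    omega
  · intro p hp
    obtain ⟨i, hi, rfl⟩ := List.mem_map.1 hp
    have hisd := Set.mem_symmDiff.1 (hsub i hi)
    have hic : i - c + c = i := by ring
    by_cases hi2 : i ∈ S₂
    · have hni1 : i ∉ S₁ := by
        rcases hisd with ⟨-, h⟩ | ⟨-, h⟩
        · exact absurd hi2 h
        · exact h
      simp only [actPair, if_pos hi2]
      refine ⟨⟨?_, ?_⟩, ?_, ?_⟩
      · rw [hP11]
        exact (rimE_mem_redSet hm).2 (by rw [hic]; exact hni1)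
      · rw [hP22]
        exact (rimE_mem_redSet hm).2 (by rw [hic]; simpa using hi2)
      · rw [hP12]
        exact spokeE_mem_redSet.2 hni1
      · rw [hP21]
        exact spokeE_mem_redSet.2 hi2
    · have hi1 : i ∈ S₁ := by
        rcases hisd with ⟨h, -⟩ | ⟨h, -⟩
        · exact h
        · exact absurd h hi2
      simp only [actPair, if_neg hi2]
      refine ⟨⟨?_, ?_⟩, ?_, ?_⟩
      · rw [hP11]
        exact spokeE_mem_redSet.2 hi1
      · rw [hP22]
        exact spokeE_mem_redSet.2 hi2
      · rw [hP12]
        exact (rimE_mem_redSet hm).2 (by rw [hic]; simpa using hi1)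
      · rw [hP21]
        exact (rimE_mem_redSet hm).2 (by rw [hic]; exact hi2)
  · rw [List.map_map, List.map_map]
    refine List.nodup_append.2 ⟨?_, ?_, ?_⟩
    · exact hnd.map (fst_actPair_injective hm)
    · exact hnd.map (snd_actPair_injective hm)
    · intro a ha b hb hab
      subst hab
      obtain ⟨i, hi, hia⟩ := List.mem_map.1 ha
      obtain ⟨j, hj, hja⟩ := List.mem_map.1 hb
      exact fst_snd_actPair_ne hm i j (by rw [show (Prod.fst ∘ actPair m S₂ c) i = (actPair m S₂ c i).1 from rfl] at hia; rw [hia, ← hja]; rfl)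

end StmtAux

/-- If two colorings `P₁ = (R₁, B₁)` and `P₂ = (R₂, B₂)` of a wheel on `n = m + 1`
vertices have the same orientation, then there is a strictly monotone sequence of
symmetric exchanges transforming `P₁` into `P₂` (each exchange takes its red element from
`R₁ ∩ B₂` and its blue element from `B₁ ∩ R₂`, and no edge is used twice), of length
exactly `(n - 1) - |R₁ ∩ R₂| = m - |R₁ ∩ R₂|`. -/


theorem stmt8 (m : ℕ) (hm : 3 ≤ m)
    (P₁ P₂ : Set (Sym2 (Option (ZMod m))) × Set (Sym2 (Option (ZMod m))))
    (h₁ : IsWheelColoring m P₁) (h₂ : IsWheelColoring m P₂)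
    (hor : SameOrientation m P₁ P₂) :
    ∃ L, WExchSeq m P₁ L P₂ ∧
      L.length = m - (P₁.1 ∩ P₂.1).ncard ∧
      (∀ p ∈ L, p.1 ∈ P₁.1 ∩ P₂.2 ∧ p.2 ∈ P₁.2 ∩ P₂.1) ∧
      (L.map Prod.fst ++ L.map Prod.snd).Nodup := by
  rcases hor with ⟨hp1, hp2⟩ | ⟨hn1, hn2⟩
  · refine StmtAux.main_core hm (Or.inr rfl) h₁ h₂ ?_ ?_
    · intro i
      rcases hp1 i with h | h
      · exact Or.inl h
      · right
        have h1 : i + 1 - (1 : ZMod m) = i := by ring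
        rw [h1]
        exact h
    · intro i
      rcases hp2 i with h | h
      · exact Or.inl h
      · right
        have h1 : i + 1 - (1 : ZMod m) = i := by ring
        rw [h1]
        exact h
  · refine StmtAux.main_core hm (Or.inl rfl) h₁ h₂ ?_ ?_
    · intro i
      rcases hn1 i with h | h
      · exact Or.inl h
      · right
        have h1 : i + 1 - (0 : ZMod m) = i + 1 := by ring
        rw [h1]
        exact h
    · intro i
      rcases hn2 i with h | h
      · exact Or.inl h
      · right
        have h1 : i + 1 - (0 : ZMod m) = i + 1 := by ring
        rw [h1]
        exact h
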